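/- If X and Y are unit Fréchet random variables with tail dependence index λ = 0 (tail independent), then both quotient ratios X/Y and Y/X have unbounded support, hence max_{i≤n} Yᵢ/Xᵢ → ∞ and max_{i≤n} Xᵢ/Yᵢ → ∞ a.s., and consequently the quotient correlation qₙ → 0 almost surely as n → ∞. -/

import Mathlib

open MeasureTheory ProbabilityTheory Real Filter

private lemma one_sub_exp_neg_le {x : ℝ} (_hx : 0 ≤ x) : 1 - Real.exp (-x) ≤ x := by
  nlinarith [Real.add_one_le_exp (-x)]

private lemma half_le_one_sub_exp_neg {x : ℝ} (h0 : 0 ≤ x) (h1 : x ≤ 1) :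
    x / 2 ≤ 1 - Real.exp (-x) := by
  have h := Real.add_one_le_exp x
  have hme : Real.exp (-x) * Real.exp x = 1 := by rw [← Real.exp_add]; simp
  have hpos := Real.exp_pos (-x)
  have ha : Real.exp (-x) * (x + 1) ≤ 1 := by
    calc Real.exp (-x) * (x + 1) ≤ Real.exp (-x) * Real.exp x :=
          mul_le_mul_of_nonneg_left h hpos.le
      _ = 1 := hme
  nlinarith

private lemma sup_fin_tendsto_atTop (a : ℕ → ℝ) (h : ∀ N : ℕ, ∃ i, (N : ℝ) < a i) :
    Tendsto (fun n : ℕ => ⨆ i : Fin n, a i) atTop atTop := by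
  rw [tendsto_atTop]
  intro b
  obtain ⟨N, hN⟩ := exists_nat_gt b
  obtain ⟨i, hi⟩ := h N
  filter_upwards [eventually_ge_atTop (i + 1)] with n hn
  have hbdd : BddAbove (Set.range fun j : Fin n => a j) :=
    Set.Finite.bddAbove (Set.finite_range _)
  have hle : a i ≤ ⨆ j : Fin n, a j := le_ciSup hbdd ⟨i, by omega⟩
  linarith

private lemma ratio_tendsto_zero (a b : ℕ → ℝ) (ha : Tendsto a atTop atTop)
    (hb : Tendsto b atTop atTop) :
    Tendsto (fun n => (a n + b n - 2) / (a n * b n - 1)) atTop (nhds 0) := by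
  have hab : Tendsto (fun n => a n * b n) atTop atTop := ha.atTop_mul_atTop₀ hb
  have ha0 : Tendsto (fun n => (a n)⁻¹) atTop (nhds 0) := ha.inv_tendsto_atTop
  have hb0 : Tendsto (fun n => (b n)⁻¹) atTop (nhds 0) := hb.inv_tendsto_atTop
  have hab0 : Tendsto (fun n => (a n * b n)⁻¹) atTop (nhds 0) := hab.inv_tendsto_atTop
  have hnum : Tendsto (fun n => (b n)⁻¹ + (a n)⁻¹ - 2 * (a n * b n)⁻¹) atTop (nhds 0) := by
    have := (hb0.add ha0).sub (hab0.const_mul 2)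
    simpa using this
  have hden : Tendsto (fun n => 1 - (a n * b n)⁻¹) atTop (nhds 1) := by
    have := (tendsto_const_nhds (x := (1 : ℝ)) (f := atTop)).sub hab0
    simpa using this
  have hdiv := hnum.div hden one_ne_zero
  rw [zero_div] at hdiv
  apply hdiv.congr'
  filter_upwards [ha.eventually_ge_atTop 2, hb.eventually_ge_atTop 2] with n hA hB
  have ha' : a n ≠ 0 := by linarith
  have hb' : b n ≠ 0 := by linarith
  have hab1 : a n * b n - 1 ≠ 0 := by nlinarith
  rw [Pi.div_apply]
  field_simp

private lemma tail_contradiction {Ω : Type*} [MeasurableSpace Ω] (μ : Measure Ω)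
    [IsProbabilityMeasure μ] (X Y V : Ω → ℝ) (hYm : Measurable Y)
    (hVF : ∀ x : ℝ, 0 < x → μ {ω | V ω ≤ x} = ENNReal.ofReal (Real.exp (-1 / x)))
    (hYF : ∀ x : ℝ, 0 < x → μ {ω | Y ω ≤ x} = ENNReal.ofReal (Real.exp (-1 / x)))
    (M : ℝ) (hM : 1 ≤ M)
    (hincl : ∀ u : ℝ, 1 ≤ u → {ω | M * u < V ω} ≤ᵐ[μ] {ω | u < X ω ∧ u < Y ω})
    (htail : Tendsto (fun u : ℝ =>
        (μ {ω | u < X ω ∧ u < Y ω}).toReal / (μ {ω | u < Y ω}).toReal)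
      atTop (nhds 0)) : False := by
  have hM0 : (0 : ℝ) < M := lt_of_lt_of_le one_pos hM
  have key : ∀ u : ℝ, 1 ≤ u →
      1 / (2 * M) ≤ (μ {ω | u < X ω ∧ u < Y ω}).toReal / (μ {ω | u < Y ω}).toReal := by
    intro u hu
    have hu0 : 0 < u := lt_of_lt_of_le one_pos hu
    have hMu1 : 1 ≤ M * u := by nlinarith
    have hMu0 : 0 < M * u := by positivity
    -- lower bound on the numerator
    have hA1 : (1 : ENNReal) - ENNReal.ofReal (Real.exp (-1 / (M * u)))
        ≤ μ {ω | M * u < V ω} := by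
      have hsub : (Set.univ : Set Ω) ⊆ {ω | M * u < V ω} ∪ {ω | V ω ≤ M * u} := by
        intro ω _
        rcases lt_or_ge (M * u) (V ω) with h | h
        · exact Or.inl h
        · exact Or.inr h
      have hle : (1 : ENNReal) ≤ μ {ω | M * u < V ω} + μ {ω | V ω ≤ M * u} := by
        calc (1 : ENNReal) = μ Set.univ := (measure_univ).symm
          _ ≤ μ ({ω | M * u < V ω} ∪ {ω | V ω ≤ M * u}) := measure_mono hsub
          _ ≤ _ := measure_union_le _ _
      rw [hVF (M * u) hMu0] at hle
      exact tsub_le_iff_right.2 hle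
    have hA2 : μ {ω | M * u < V ω} ≤ μ {ω | u < X ω ∧ u < Y ω} :=
      measure_mono_ae (hincl u hu)
    have hofle : ENNReal.ofReal (Real.exp (-1 / (M * u))) ≤ 1 := by
      rw [ENNReal.ofReal_le_one]
      apply Real.exp_le_one_iff.2
      have : (0:ℝ) < 1 / (M * u) := by positivity
      rw [neg_div]; linarith
    have hA : 1 - Real.exp (-1 / (M * u)) ≤ (μ {ω | u < X ω ∧ u < Y ω}).toReal := by
      have h1 : ((1 : ENNReal) - ENNReal.ofReal (Real.exp (-1 / (M * u)))).toReal
          = 1 - Real.exp (-1 / (M * u)) := by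
        rw [ENNReal.toReal_sub_of_le hofle ENNReal.one_ne_top, ENNReal.toReal_one,
          ENNReal.toReal_ofReal (Real.exp_nonneg _)]
      rw [← h1]
      exact ENNReal.toReal_mono (measure_ne_top μ _) (hA1.trans hA2)
    -- value of the denominator
    have hBset : {ω | u < Y ω} = {ω | Y ω ≤ u}ᶜ := by
      ext ω; simp [not_le]
    have hBm : MeasurableSet {ω | Y ω ≤ u} := hYm measurableSet_Iic
    have hofle' : ENNReal.ofReal (Real.exp (-1 / u)) ≤ 1 := by
      rw [ENNReal.ofReal_le_one]
      apply Real.exp_le_one_iff.2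
      have : (0:ℝ) < 1 / u := by positivity
      rw [neg_div]; linarith
    have hB : (μ {ω | u < Y ω}).toReal = 1 - Real.exp (-1 / u) := by
      rw [hBset, measure_compl hBm (measure_ne_top μ _), measure_univ, hYF u hu0,
        ENNReal.toReal_sub_of_le hofle' ENNReal.one_ne_top, ENNReal.toReal_one,
        ENNReal.toReal_ofReal (Real.exp_nonneg _)]
    have hBpos : 0 < 1 - Real.exp (-1 / u) := by
      have : Real.exp (-1 / u) < 1 := by
        apply Real.exp_lt_one_iff.2
        have : (0:ℝ) < 1 / u := by positivity
        rw [neg_div]; linarith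
      linarith
    -- bounds
    have e1 : 1 / (M * u) / 2 ≤ 1 - Real.exp (-1 / (M * u)) := by
      have := half_le_one_sub_exp_neg (x := 1 / (M * u)) (by positivity)
        (by rw [div_le_one hMu0]; linarith)
      rw [neg_div]
      linarith
    have e2 : 1 - Real.exp (-1 / u) ≤ 1 / u := by
      have := one_sub_exp_neg_le (x := 1 / u) (by positivity)
      rw [neg_div]
      linarith
    rw [hB]
    calc 1 / (2 * M) = (1 / (M * u) / 2) / (1 / u) := by
          field_simp
      _ ≤ (μ {ω | u < X ω ∧ u < Y ω}).toReal / (1 - Real.exp (-1 / u)) := by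
          apply div_le_div₀ _ (e1.trans hA) hBpos e2
          exact le_trans (by positivity) (e1.trans hA)
  have hev := htail.eventually_lt_const (show (0:ℝ) < 1 / (2 * M) by positivity)
  obtain ⟨u, hu1, hu2⟩ := ((eventually_ge_atTop (1 : ℝ)).and hev).exists
  exact absurd (key u hu1) (not_le.2 hu2)

/-- Theorem 5.1 (necessary condition): if `X` and `Y` are unit Fréchet with tail
dependence index `λ = 0`, then `X/Y` and `Y/X` have unbounded support, hence for an
i.i.d. sample `(Xᵢ,Yᵢ)` the maxima `max_{i≤n} Yᵢ/Xᵢ` and `max_{i≤n} Xᵢ/Yᵢ` tend to `∞`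
a.s., and consequently `qₙ → 0` almost surely. -/
theorem tail_independent_quotient_correlation_to_zero {Ω : Type*} [MeasurableSpace Ω]
    (μ : Measure Ω) [IsProbabilityMeasure μ] (X Y : ℕ → Ω → ℝ)
    (hX : ∀ i, Measurable (X i)) (hY : ∀ i, Measurable (Y i))
    (hiid : iIndepFun (fun i ω => (X i ω, Y i ω)) μ)
    (hident : ∀ i, Measure.map (fun ω => (X i ω, Y i ω)) μ
      = Measure.map (fun ω => (X 0 ω, Y 0 ω)) μ)
    (hXpos : ∀ i, ∀ᵐ ω ∂μ, 0 < X i ω) (hYpos : ∀ i, ∀ᵐ ω ∂μ, 0 < Y i ω)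
    (hXF : ∀ i, ∀ x : ℝ, 0 < x → μ {ω | X i ω ≤ x} = ENNReal.ofReal (exp (-1 / x)))
    (hYF : ∀ i, ∀ x : ℝ, 0 < x → μ {ω | Y i ω ≤ x} = ENNReal.ofReal (exp (-1 / x)))
    (htail : Tendsto (fun u : ℝ =>
        (μ {ω | u < X 0 ω ∧ u < Y 0 ω}).toReal / (μ {ω | u < Y 0 ω}).toReal)
      atTop (nhds 0)) :
    (∀ M : ℝ, 0 < μ {ω | M < Y 0 ω / X 0 ω} ∧ 0 < μ {ω | M < X 0 ω / Y 0 ω}) ∧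
    (∀ᵐ ω ∂μ,
      Tendsto (fun n : ℕ => ⨆ i : Fin n, Y i ω / X i ω) atTop atTop ∧
      Tendsto (fun n : ℕ => ⨆ i : Fin n, X i ω / Y i ω) atTop atTop ∧
      Tendsto (fun n : ℕ =>
          ((⨆ i : Fin n, Y i ω / X i ω) + (⨆ i : Fin n, X i ω / Y i ω) - 2) /
          ((⨆ i : Fin n, Y i ω / X i ω) * (⨆ i : Fin n, X i ω / Y i ω) - 1))
        atTop (nhds 0)) := by
  -- Part 1: positive probability of the ratios exceeding any bound
  have part1 : ∀ M : ℝ, 0 < μ {ω | M < Y 0 ω / X 0 ω} ∧ 0 < μ {ω | M < X 0 ω / Y 0 ω} := by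
    intro M
    set M' : ℝ := max M 1 with hM'def
    have hM'1 : 1 ≤ M' := le_max_right _ _
    have hM'0 : (0:ℝ) < M' := lt_of_lt_of_le one_pos hM'1
    have hMM' : M ≤ M' := le_max_left _ _
    constructor
    · -- Y/X side
      rw [pos_iff_ne_zero]
      intro h0
      have h0' : μ {ω | M' < Y 0 ω / X 0 ω} = 0 :=
        measure_mono_null (fun ω h => lt_of_le_of_lt hMM' h) h0
      have hae : ∀ᵐ ω ∂μ, Y 0 ω / X 0 ω ≤ M' := by
        rw [ae_iff]
        simpa [not_le] using h0'
      refine tail_contradiction μ (X 0) (Y 0) (Y 0) (hY 0) (hYF 0) (hYF 0) M' hM'1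
        (fun u hu => ?_) htail
      have hu0 : (0:ℝ) < u := lt_of_lt_of_le one_pos hu
      filter_upwards [hae, hXpos 0] with ω h1 h2
      intro h3
      have hYle : Y 0 ω ≤ M' * X 0 ω := by
        rwa [div_le_iff₀ h2] at h1
      constructor
      · have : M' * u < M' * X 0 ω := lt_of_lt_of_le h3 hYle
        exact lt_of_mul_lt_mul_left this hM'0.le
      · have : u ≤ M' * u := le_mul_of_one_le_left hu0.le hM'1
        exact lt_of_le_of_lt this h3
    · -- X/Y side
      rw [pos_iff_ne_zero]
      intro h0
      have h0' : μ {ω | M' < X 0 ω / Y 0 ω} = 0 :=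
        measure_mono_null (fun ω h => lt_of_le_of_lt hMM' h) h0
      have hae : ∀ᵐ ω ∂μ, X 0 ω / Y 0 ω ≤ M' := by
        rw [ae_iff]
        simpa [not_le] using h0'
      refine tail_contradiction μ (X 0) (Y 0) (X 0) (hY 0) (hXF 0) (hYF 0) M' hM'1
        (fun u hu => ?_) htail
      have hu0 : (0:ℝ) < u := lt_of_lt_of_le one_pos hu
      filter_upwards [hae, hYpos 0] with ω h1 h2
      intro h3
      have hXle : X 0 ω ≤ M' * Y 0 ω := by
        rwa [div_le_iff₀ h2] at h1
      constructor
      · have : u ≤ M' * u := le_mul_of_one_le_left hu0.le hM'1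
        exact lt_of_le_of_lt this h3
      · have : M' * u < M' * Y 0 ω := lt_of_lt_of_le h3 hXle
        exact lt_of_mul_lt_mul_left this hM'0.le
  refine ⟨part1, ?_⟩
  -- Part 2: Borel-Cantelli gives a.s. unboundedness
  set f : ℕ → Ω → ℝ × ℝ := fun i ω => (X i ω, Y i ω) with hfdef
  have hfm : ∀ i, Measurable (f i) := fun i => (hX i).prodMk (hY i)
  -- generic frequently lemma
  have freq : ∀ S : Set (ℝ × ℝ), MeasurableSet S → 0 < μ (f 0 ⁻¹' S) →
      ∀ᵐ ω ∂μ, ∃ᶠ i in atTop, ω ∈ f i ⁻¹' S := by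
    intro S hS hpos
    set s : ℕ → Set Ω := fun i => f i ⁻¹' S with hsdef
    have hsm : ∀ i, MeasurableSet (s i) := fun i => (hfm i) hS
    have hs_eq : ∀ i, μ (s i) = μ (s 0) := by
      intro i
      have h1 : μ (s i) = Measure.map (f i) μ S := (Measure.map_apply (hfm i) hS).symm
      have h2 : μ (s 0) = Measure.map (f 0) μ S := (Measure.map_apply (hfm 0) hS).symm
      rw [h1, h2, hident i]
    have hindep : iIndepSet s μ := by
      rw [iIndepSet_iff_meas_biInter hsm]
      intro t
      exact hiid.measure_inter_preimage_eq_mul t (fun i _ => hS)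
    have hsum : (∑' n, μ (s n)) = ⊤ := by
      have : (∑' n, μ (s n)) = ∑' _ : ℕ, μ (s 0) := by
        congr 1
        funext n
        exact hs_eq n
      rw [this]
      exact ENNReal.tsum_const_eq_top_of_ne_zero (pos_iff_ne_zero.1 hpos)
    have hone := measure_limsup_eq_one hsm hindep hsum
    have hmeas : MeasurableSet (limsup s atTop) := MeasurableSet.measurableSet_limsup hsm
    have hcompl : μ (limsup s atTop)ᶜ = 0 := by
      rw [measure_compl hmeas (measure_ne_top μ _), hone, measure_univ, tsub_self]
    have : ∀ᵐ ω ∂μ, ω ∈ limsup s atTop := by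
      rw [ae_iff]
      exact hcompl
    filter_upwards [this] with ω hω
    exact mem_limsup_iff_frequently_mem.1 hω
  have hfreqYX : ∀ᵐ ω ∂μ, ∀ N : ℕ, ∃ i, (N : ℝ) < Y i ω / X i ω := by
    rw [ae_all_iff]
    intro N
    have hS : MeasurableSet {p : ℝ × ℝ | (N : ℝ) < p.2 / p.1} :=
      measurableSet_lt measurable_const (measurable_snd.div measurable_fst)
    have hpos : 0 < μ (f 0 ⁻¹' {p : ℝ × ℝ | (N : ℝ) < p.2 / p.1}) := (part1 N).1
    filter_upwards [freq _ hS hpos] with ω hω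
    obtain ⟨i, hi⟩ := hω.exists
    exact ⟨i, hi⟩
  have hfreqXY : ∀ᵐ ω ∂μ, ∀ N : ℕ, ∃ i, (N : ℝ) < X i ω / Y i ω := by
    rw [ae_all_iff]
    intro N
    have hS : MeasurableSet {p : ℝ × ℝ | (N : ℝ) < p.1 / p.2} :=
      measurableSet_lt measurable_const (measurable_fst.div measurable_snd)
    have hpos : 0 < μ (f 0 ⁻¹' {p : ℝ × ℝ | (N : ℝ) < p.1 / p.2}) := (part1 N).2
    filter_upwards [freq _ hS hpos] with ω hω
    obtain ⟨i, hi⟩ := hω.exists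
    exact ⟨i, hi⟩
  filter_upwards [hfreqYX, hfreqXY] with ω h1 h2
  have t1 : Tendsto (fun n : ℕ => ⨆ i : Fin n, Y i ω / X i ω) atTop atTop :=
    sup_fin_tendsto_atTop _ h1
  have t2 : Tendsto (fun n : ℕ => ⨆ i : Fin n, X i ω / Y i ω) atTop atTop :=
    sup_fin_tendsto_atTop _ h2
  exact ⟨t1, t2, ratio_tendsto_zero _ _ t1 t2⟩
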